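/- Let (H₋, H₊, Γ₋, Γ₊) be a boundary quadruple for a densely defined skew-symmetric operator A₀ on a Hilbert space V, with A = (−A₀)* and closure Ā₀. If Γ₋ = 0, then Ā₀ is the only m-dissipative extension of A₀: Ā₀ is m-dissipative and every m-dissipative operator B with A₀ ⊆ B equals Ā₀. -/
import Mathlib


variable {𝕜 V : Type*} [RCLike 𝕜] [NormedAddCommGroup V] [InnerProductSpace 𝕜 V]
  [CompleteSpace V]

/-- An operator `A` on `V` is *skew-symmetric* if `⟪Au, v⟫ + ⟪u, Av⟫ = 0` for all
`u, v ∈ D(A)`. -/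
def SkewSymmetric (A : V →ₗ.[𝕜] V) : Prop :=
  ∀ u v : A.domain, @inner 𝕜 _ _ (A u) (v : V) + @inner 𝕜 _ _ (u : V) (A v) = 0

/-- A *boundary quadruple* `(H₋, H₊, Γ₋, Γ₊)` for a densely defined skew-symmetric operator
`A₀` (here expressed via `A := (-A₀)*`) consists of pre-Hilbert spaces `H₋, H₊` and surjective
linear maps `Γ₋ : D(A) → H₋`, `Γ₊ : D(A) → H₊` such that
`⟪Au, v⟫ + ⟪u, Av⟫ = ⟪Γ₊u, Γ₊v⟫ - ⟪Γ₋u, Γ₋v⟫` for all `u, v ∈ D(A)` and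
`ker Γ₋ + ker Γ₊ = D(A)`. -/
def IsBoundaryQuadruple (A : V →ₗ.[𝕜] V) {Hm Hp : Type*}
    [NormedAddCommGroup Hm] [InnerProductSpace 𝕜 Hm]
    [NormedAddCommGroup Hp] [InnerProductSpace 𝕜 Hp]
    (Γm : A.domain →ₗ[𝕜] Hm) (Γp : A.domain →ₗ[𝕜] Hp) : Prop :=
  Function.Surjective Γm ∧ Function.Surjective Γp ∧
    (∀ u v : A.domain,
      @inner 𝕜 _ _ (A u) (v : V) + @inner 𝕜 _ _ (u : V) (A v) =
        @inner 𝕜 _ _ (Γp u) (Γp v) - @inner 𝕜 _ _ (Γm u) (Γm v)) ∧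
    LinearMap.ker Γm ⊔ LinearMap.ker Γp = ⊤

/-- An operator `A` on `V` is *dissipative* if `Re ⟪Ax, x⟫ ≤ 0` for all `x ∈ D(A)`. -/
def Dissipative (A : V →ₗ.[𝕜] V) : Prop :=
  ∀ x : A.domain, RCLike.re (@inner 𝕜 _ _ (A x) (x : V)) ≤ 0

/-- `A` is *m-dissipative* if it is dissipative and `(Id - A) D(A) = V`. -/
def MDissipative (A : V →ₗ.[𝕜] V) : Prop :=
  Dissipative A ∧ ∀ y : V, ∃ x : A.domain, (x : V) - A x = y

local notation "⟪" x ", " y "⟫" => @inner 𝕜 _ _ x y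

set_option linter.unusedSectionVars false in
/-- The basic estimate for dissipative operators: `‖x‖ ≤ ‖x - Bx‖`. -/
lemma Dissipative.norm_le_aux {B : V →ₗ.[𝕜] V} (hB : Dissipative B) (x : B.domain) :
    ‖(x : V)‖ ≤ ‖(x : V) - B x‖ := by
  rcases eq_or_lt_of_le (norm_nonneg (x : V)) with h | h
  · rw [← h]; exact norm_nonneg _
  have h1 : ‖(x : V)‖ * ‖(x : V)‖ ≤ ‖(x : V) - B x‖ * ‖(x : V)‖ := by
    calc ‖(x : V)‖ * ‖(x : V)‖ = RCLike.re ⟪(x : V), (x : V)⟫ :=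
          (inner_self_eq_norm_mul_norm _).symm
      _ ≤ RCLike.re ⟪(x : V), (x : V)⟫ - RCLike.re ⟪B x, (x : V)⟫ := by
          have := hB x; linarith
      _ = RCLike.re ⟪(x : V) - B x, (x : V)⟫ := by rw [inner_sub_left, map_sub]
      _ ≤ ‖(x : V) - B x‖ * ‖(x : V)‖ := re_inner_le_norm _ _
  exact le_of_mul_le_mul_right h1 h

set_option linter.unusedSectionVars false in
/-- A dissipative operator has injective `Id - B`. -/
lemma Dissipative.inj_aux {B : V →ₗ.[𝕜] V} (hB : Dissipative B) {x y : B.domain}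
    (h : (x : V) - B x = (y : V) - B y) : x = y := by
  have h2 := hB.norm_le_aux (x - y)
  have h3 : ((x - y : B.domain) : V) - B (x - y) = 0 := by
    simp only [Submodule.coe_sub, LinearPMap.map_sub]
    rw [sub_sub_sub_comm, h, sub_self]
  rw [h3, norm_zero] at h2
  have h4 : ((x - y : B.domain) : V) = 0 := norm_le_zero_iff.mp h2
  rw [Submodule.coe_sub] at h4
  exact Subtype.ext (sub_eq_zero.mp h4)

/-- If `Γ₋ = 0`, then the closure `Ā₀` is the unique m-dissipative extension of `A₀`. -/
theorem unique_mDissipative_extension_of_gammaMinus_eq_zero {Hm Hp : Type*}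
    [NormedAddCommGroup Hm] [InnerProductSpace 𝕜 Hm]
    [NormedAddCommGroup Hp] [InnerProductSpace 𝕜 Hp]
    (A₀ : V →ₗ.[𝕜] V) (hdense : Dense (A₀.domain : Set V)) (hskew : SkewSymmetric A₀)
    (Γm : ((-A₀).adjoint).domain →ₗ[𝕜] Hm) (Γp : ((-A₀).adjoint).domain →ₗ[𝕜] Hp)
    (hq : IsBoundaryQuadruple (-A₀).adjoint Γm Γp)
    (hΓm : Γm = 0) :
    MDissipative A₀.closure ∧
      ∀ B : V →ₗ.[𝕜] V, A₀ ≤ B → MDissipative B → B = A₀.closure := by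
  obtain ⟨-, -, hgreen, -⟩ := hq
  have hdense' : Dense ((-A₀).domain : Set V) := hdense
  -- `Re ⟪A u, u⟫ ≥ 0` on `D(A)` where `A := (-A₀)*`
  have hkey : ∀ u : ((-A₀).adjoint).domain,
      0 ≤ RCLike.re ⟪(-A₀).adjoint u, (u : V)⟫ := by
    intro u
    have h := congrArg RCLike.re (hgreen u u)
    rw [hΓm] at h
    simp only [LinearMap.zero_apply, inner_zero_left, map_add, map_sub, map_zero, sub_zero] at h
    rw [inner_re_symm (u : V) ((-A₀).adjoint u)] at h
    have h2 : (0 : ℝ) ≤ RCLike.re ⟪Γp u, Γp u⟫ := inner_self_nonneg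
    linarith
  -- `A₀ ≤ (-A₀)*`
  have hfa : (-A₀).IsFormalAdjoint A₀ := by
    intro x y
    rw [LinearPMap.neg_apply, inner_neg_left]
    exact neg_eq_of_add_eq_zero_right (hskew x y)
  have hA₀leA : A₀ ≤ (-A₀).adjoint := hfa.le_adjoint hdense'
  -- `(-A₀)*` is closed
  have hAclosed : ((-A₀).adjoint).IsClosed := by
    have hgr : ((-A₀).adjoint.graph : Set (V × V)) =
        ⋂ y : (-A₀).domain, {p : V × V | ⟪p.2, (y : V)⟫ = ⟪p.1, (-A₀) y⟫} := by
      ext ⟨v, w⟩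
      simp only [Set.mem_iInter, SetLike.mem_coe, LinearPMap.mem_graph_iff, Set.mem_setOf_eq]
      constructor
      · rintro ⟨x, hx1, hx2⟩ y
        subst hx1; subst hx2
        exact LinearPMap.adjoint_isFormalAdjoint hdense' x y
      · intro h
        have hv : v ∈ (-A₀).adjoint.domain :=
          LinearPMap.mem_adjoint_domain_of_exists v ⟨w, fun x => h x⟩
        exact ⟨⟨v, hv⟩, rfl, LinearPMap.adjoint_apply_eq hdense' ⟨v, hv⟩ (fun x => h x)⟩
    rw [LinearPMap.IsClosed, hgr]
    exact isClosed_iInter fun y => isClosed_eq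
      (Continuous.inner continuous_snd continuous_const)
      (Continuous.inner continuous_fst continuous_const)
  have hclosable : A₀.IsClosable :=
    LinearPMap.isClosable_iff_exists_closed_extension.mpr ⟨_, hAclosed, hA₀leA⟩
  -- `A₀` and its closure are dissipative
  have hd0 : Dissipative A₀ := by
    intro x
    have h := congrArg RCLike.re (hskew x x)
    simp only [map_add, map_zero] at h
    rw [inner_re_symm (x : V) (A₀ x)] at h
    linarith
  have hdc : Dissipative A₀.closure := by
    intro x
    have hx : ((x : V), A₀.closure x) ∈ A₀.closure.graph := A₀.closure.mem_graph x
    rw [← hclosable.graph_closure_eq_closure_graph] at hx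
    have hx' : ((x : V), A₀.closure x) ∈ closure (A₀.graph : Set (V × V)) := by
      rwa [← SetLike.mem_coe, Submodule.topologicalClosure_coe] at hx
    have hsub : (A₀.graph : Set (V × V)) ⊆ {p : V × V | RCLike.re ⟪p.2, p.1⟫ ≤ 0} := by
      rintro ⟨a, b⟩ hab
      rw [SetLike.mem_coe, LinearPMap.mem_graph_iff] at hab
      obtain ⟨y, hy1, hy2⟩ := hab
      simp only at hy1 hy2
      subst hy1; subst hy2
      exact hd0 y
    have hcl : IsClosed {p : V × V | RCLike.re ⟪p.2, p.1⟫ ≤ 0} :=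
      isClosed_le (RCLike.continuous_re.comp
        (Continuous.inner continuous_snd continuous_fst)) continuous_const
    exact (IsClosed.closure_subset_iff hcl).mpr hsub hx'
  -- the range of `Id - Ā₀`
  set L : A₀.closure.domain →ₗ[𝕜] V := A₀.closure.domain.subtype - A₀.closure.toFun with hL
  have hLapp : ∀ x : A₀.closure.domain, L x = (x : V) - A₀.closure x := fun x => rfl
  have hRclosed : IsClosed ((LinearMap.range L : Submodule 𝕜 V) : Set V) := by
    apply IsSeqClosed.isClosed
    intro ys y hys hy
    choose xs hxs using hys
    have hys2 : ∀ n, (xs n : V) - A₀.closure (xs n) = ys n := fun n => (hLapp _).symm.trans (hxs n)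
    have hycauchy : CauchySeq ys := hy.cauchySeq
    have hxcauchy : CauchySeq (fun n => (xs n : V)) := by
      rw [Metric.cauchySeq_iff] at hycauchy ⊢
      intro ε hε
      obtain ⟨N, hN⟩ := hycauchy ε hε
      refine ⟨N, fun m hm n hn => ?_⟩
      have hest := hdc.norm_le_aux (xs m - xs n)
      simp only [Submodule.coe_sub, LinearPMap.map_sub] at hest
      rw [dist_eq_norm]
      have heq : ‖((xs m : V) - (xs n : V)) - ((A₀.closure (xs m)) - A₀.closure (xs n))‖
          = ‖ys m - ys n‖ := by
        rw [← hys2 m, ← hys2 n]; congr 1; abel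
      calc ‖(xs m : V) - (xs n : V)‖ ≤ _ := hest
        _ = ‖ys m - ys n‖ := heq
        _ = dist (ys m) (ys n) := (dist_eq_norm _ _).symm
        _ < ε := hN m hm n hn
    obtain ⟨x, hxlim⟩ := cauchySeq_tendsto_of_complete hxcauchy
    have hTlim : Filter.Tendsto (fun n => A₀.closure (xs n)) Filter.atTop (nhds (x - y)) := by
      have heq : (fun n => A₀.closure (xs n)) = fun n => (xs n : V) - ys n :=
        funext fun n => by rw [← hys2 n]; abel
      rw [heq]
      exact hxlim.sub hy
    have hclosedT : IsClosed (A₀.closure.graph : Set (V × V)) := hclosable.closure_isClosed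
    have hmem : (x, x - y) ∈ A₀.closure.graph := by
      have : (x, x - y) ∈ closure (A₀.closure.graph : Set (V × V)) :=
        mem_closure_of_tendsto (hxlim.prodMk_nhds hTlim)
          (Filter.Eventually.of_forall fun n => A₀.closure.mem_graph (xs n))
      rwa [hclosedT.closure_eq] at this
    rw [LinearPMap.mem_graph_iff] at hmem
    obtain ⟨u, hu1, hu2⟩ := hmem
    simp only at hu1 hu2
    exact ⟨u, by rw [hLapp, hu1, hu2]; abel⟩
  haveI : CompleteSpace (LinearMap.range L : Submodule 𝕜 V) := hRclosed.completeSpace_coe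
  have hRtop : (LinearMap.range L : Submodule 𝕜 V) = ⊤ := by
    rw [← Submodule.orthogonal_eq_bot_iff, Submodule.eq_bot_iff]
    intro v hv
    rw [Submodule.mem_orthogonal] at hv
    have hvv : ∀ x : (-A₀).domain, ⟪-v, (x : V)⟫ = ⟪v, (-A₀) x⟫ := by
      intro x
      have hx' : (x : V) ∈ A₀.closure.domain := A₀.le_closure.1 x.2
      have hTx : A₀.closure ⟨(x : V), hx'⟩ = A₀ x := (A₀.le_closure.2 rfl).symm
      have hmem : (x : V) - A₀ x ∈ LinearMap.range L := ⟨⟨x, hx'⟩, by rw [hLapp, hTx]⟩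
      have h0 := hv _ hmem
      rw [inner_sub_left, sub_eq_zero] at h0
      have h2 : ⟪v, (x : V)⟫ = ⟪v, A₀ x⟫ := by
        rw [← inner_conj_symm v (x : V), ← inner_conj_symm v (A₀ x), h0]
      rw [LinearPMap.neg_apply, inner_neg_left, inner_neg_right, neg_inj]
      exact h2
    have hvdom : v ∈ (-A₀).adjoint.domain :=
      LinearPMap.mem_adjoint_domain_of_exists v ⟨-v, hvv⟩
    have hvA : (-A₀).adjoint ⟨v, hvdom⟩ = -v :=
      LinearPMap.adjoint_apply_eq hdense' ⟨v, hvdom⟩ hvv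
    have h3 := hkey ⟨v, hvdom⟩
    rw [hvA, inner_neg_left, map_neg] at h3
    have h4 : RCLike.re ⟪v, v⟫ = ‖v‖ * ‖v‖ := inner_self_eq_norm_mul_norm v
    have h5 : ‖v‖ * ‖v‖ = 0 := le_antisymm (by linarith) (mul_self_nonneg _)
    rw [← norm_eq_zero]
    exact mul_self_eq_zero.mp h5
  have hsurj : ∀ y : V, ∃ x : A₀.closure.domain, (x : V) - A₀.closure x = y := by
    intro y
    have hy : y ∈ LinearMap.range L := hRtop ▸ Submodule.mem_top
    obtain ⟨x, hx⟩ := hy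
    exact ⟨x, (hLapp x).symm.trans hx⟩
  refine ⟨⟨hdc, hsurj⟩, ?_⟩
  -- uniqueness
  intro B hAB hBm
  have hBkey : ∀ x : B.domain, ∃ u : A₀.closure.domain,
      (u : V) = (x : V) ∧ B x = A₀.closure u := by
    intro x
    obtain ⟨u, hu⟩ := hsurj ((x : V) - B x)
    have hgraph : ((u : V), A₀.closure u) ∈ closure (A₀.graph : Set (V × V)) := by
      have hm := A₀.closure.mem_graph u
      rw [← hclosable.graph_closure_eq_closure_graph] at hm
      rwa [← SetLike.mem_coe, Submodule.topologicalClosure_coe] at hm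
    obtain ⟨p, hp, hplim⟩ := mem_closure_iff_seq_limit.mp hgraph
    choose w hw1 hw2 using fun n => (LinearPMap.mem_graph_iff _).mp (hp n)
    have hlim1 : Filter.Tendsto (fun n => (w n : V)) Filter.atTop (nhds (u : V)) := by
      have := (continuous_fst.tendsto _).comp hplim
      simpa only [Function.comp_def, hw1] using this
    have hlim2 : Filter.Tendsto (fun n => A₀ (w n)) Filter.atTop (nhds (A₀.closure u)) := by
      have := (continuous_snd.tendsto _).comp hplim
      simpa only [Function.comp_def, hw2] using this
    have hest : ∀ n, ‖(x : V) - (w n : V)‖ ≤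
        ‖((x : V) - B x) - ((w n : V) - A₀ (w n))‖ := by
      intro n
      have hwB : (w n : V) ∈ B.domain := hAB.1 (w n).2
      have hBw : B ⟨(w n : V), hwB⟩ = A₀ (w n) := (hAB.2 rfl).symm
      have h := hBm.1.norm_le_aux (x - ⟨(w n : V), hwB⟩)
      simp only [Submodule.coe_sub, LinearPMap.map_sub] at h
      rw [hBw] at h
      refine h.trans (le_of_eq ?_)
      congr 1; abel
    have hrhs : Filter.Tendsto
        (fun n => ‖((x : V) - B x) - ((w n : V) - A₀ (w n))‖) Filter.atTop (nhds 0) := by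
      have h1 : Filter.Tendsto (fun n => ((x : V) - B x) - ((w n : V) - A₀ (w n)))
          Filter.atTop (nhds (((x : V) - B x) - ((u : V) - A₀.closure u))) :=
        tendsto_const_nhds.sub (hlim1.sub hlim2)
      rw [hu, sub_self] at h1
      simpa using h1.norm
    have hlhs : Filter.Tendsto (fun n => ‖(x : V) - (w n : V)‖)
        Filter.atTop (nhds ‖(x : V) - (u : V)‖) :=
      (tendsto_const_nhds.sub hlim1).norm
    have hle : ‖(x : V) - (u : V)‖ ≤ 0 := le_of_tendsto_of_tendsto' hlhs hrhs hest
    have hx_eq : (u : V) = (x : V) :=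
      (sub_eq_zero.mp (norm_le_zero_iff.mp hle)).symm
    have hBx : B x = A₀.closure u := by
      rw [← hx_eq] at hu
      exact (sub_right_inj.mp hu.symm)
    exact ⟨u, hx_eq, hBx⟩
  have haux : ∀ u : A₀.closure.domain, ∃ x : B.domain,
      (x : V) = (u : V) ∧ A₀.closure u = B x := by
    intro u
    obtain ⟨x, hx⟩ := hBm.2 ((u : V) - A₀.closure u)
    obtain ⟨u', hu'1, hu'2⟩ := hBkey x
    have heq : (u' : V) - A₀.closure u' = (u : V) - A₀.closure u := by
      rw [hu'1, ← hu'2]; exact hx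
    have huu : u' = u := hdc.inj_aux heq
    refine ⟨x, ?_, ?_⟩
    · rw [← hu'1, huu]
    · rw [← huu, ← hu'2]
  have hBleT : B ≤ A₀.closure := by
    refine ⟨fun ww hw => ?_, fun x y hxy => ?_⟩
    · obtain ⟨u, hu1, -⟩ := hBkey ⟨ww, hw⟩
      rw [show ww = (u : V) from hu1.symm]
      exact u.2
    · obtain ⟨u, hu1, hu2⟩ := hBkey x
      rw [hu2]
      congr 1
      exact Subtype.ext (hu1.trans hxy)
  have hTleB : A₀.closure ≤ B := by
    refine ⟨fun ww hw => ?_, fun u y huy => ?_⟩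
    · obtain ⟨x, hx1, -⟩ := haux ⟨ww, hw⟩
      rw [show ww = (x : V) from hx1.symm]
      exact x.2
    · obtain ⟨x, hx1, hx2⟩ := haux u
      rw [hx2]
      congr 1
      exact Subtype.ext (hx1.trans huy)
  exact le_antisymm hBleT hTleB
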